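/- For every α > 1/2 there exist ε₀ > 0 and an integer n₀ such that for every n ≥ n₀ and every ε with 0 < ε ≤ ε₀ the following holds: if G is a bipartite graph with parts A and B both of size n in which every vertex has degree between (α−ε)n and (α+ε)n, then G contains an r-factor for every nonnegative integer r ≤ (α − 10√ε)n. -/

import Mathlib

/-- Degree of a left vertex `a` in the bipartite graph with edge set `G ⊆ Fin n × Fin n`. -/
def degL (n : ℕ) (G : Finset (Fin n × Fin n)) (a : Fin n) : ℕ :=
  (G.filter (fun e => e.1 = a)).card

/-- Degree of a right vertex `b` in the bipartite graph with edge set `G ⊆ Fin n × Fin n`. -/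
def degR (n : ℕ) (G : Finset (Fin n × Fin n)) (b : Fin n) : ℕ :=
  (G.filter (fun e => e.2 = b)).card

/-- `F` is an `r`-factor of the bipartite graph `G`: a spanning subgraph in which
every vertex (on either side) has degree exactly `r`. -/
def IsFactor (n : ℕ) (G F : Finset (Fin n × Fin n)) (r : ℕ) : Prop :=
  F ⊆ G ∧ (∀ a : Fin n, degL n F a = r) ∧ (∀ b : Fin n, degR n F b = r)




lemma degL_le (n : ℕ) (G : Finset (Fin n × Fin n)) (a : Fin n) : degL n G a ≤ n := by
  rw [degL]
  calc (G.filter (fun e => e.1 = a)).card ≤ (({a} : Finset (Fin n)) ×ˢ Finset.univ).card := by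
        apply Finset.card_le_card
        intro p hp
        have h := (Finset.mem_filter.mp hp).2
        exact Finset.mem_product.mpr ⟨by simp [h], Finset.mem_univ _⟩
    _ = n := by simp

lemma fact_split (n : ℕ) (G : Finset (Fin n × Fin n)) (S T : Finset (Fin n)) :
    (G.filter (fun p => p.1 ∈ S)).card
      = (G.filter (fun p => p.1 ∈ S ∧ p.2 ∈ T)).card
        + (G.filter (fun p => p.1 ∈ S ∧ p.2 ∉ T)).card := by
  rw [← Finset.filter_filter, ← Finset.filter_filter]
  exact (Finset.card_filter_add_card_filter_not
    (fun p : Fin n × Fin n => p.2 ∈ T)).symm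

lemma fact_split' (n : ℕ) (G : Finset (Fin n × Fin n)) (S T : Finset (Fin n)) :
    (G.filter (fun p => p.2 ∈ T)).card
      = (G.filter (fun p => p.1 ∈ S ∧ p.2 ∈ T)).card
        + (G.filter (fun p => p.1 ∉ S ∧ p.2 ∈ T)).card := by
  have h1 : (G.filter (fun p => p.1 ∈ S ∧ p.2 ∈ T))
      = (G.filter (fun p => p.2 ∈ T)).filter (fun p => p.1 ∈ S) := by
    rw [Finset.filter_filter]
    congr 1
    ext p
    exact and_comm
  have h2 : (G.filter (fun p => p.1 ∉ S ∧ p.2 ∈ T))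
      = (G.filter (fun p => p.2 ∈ T)).filter (fun p => p.1 ∉ S) := by
    rw [Finset.filter_filter]
    congr 1
    ext p
    exact and_comm
  rw [h1, h2]
  exact (Finset.card_filter_add_card_filter_not
    (fun p : Fin n × Fin n => p.1 ∈ S)).symm

lemma fact_prod (n : ℕ) (G : Finset (Fin n × Fin n)) (S T : Finset (Fin n)) :
    (G.filter (fun p => p.1 ∈ S ∧ p.2 ∉ T)).card ≤ S.card * Tᶜ.card := by
  calc (G.filter (fun p => p.1 ∈ S ∧ p.2 ∉ T)).card ≤ (S ×ˢ Tᶜ).card := by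
        apply Finset.card_le_card
        intro p hp
        obtain ⟨-, h1, h2⟩ := Finset.mem_filter.mp hp
        exact Finset.mem_product.mpr ⟨h1, Finset.mem_compl.mpr h2⟩
    _ = S.card * Tᶜ.card := Finset.card_product S Tᶜ

lemma fact_prod' (n : ℕ) (G : Finset (Fin n × Fin n)) (S T : Finset (Fin n)) :
    (G.filter (fun p => p.1 ∉ S ∧ p.2 ∈ T)).card ≤ Sᶜ.card * T.card := by
  calc (G.filter (fun p => p.1 ∉ S ∧ p.2 ∈ T)).card ≤ (Sᶜ ×ˢ T).card := by
        apply Finset.card_le_card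
        intro p hp
        obtain ⟨-, h1, h2⟩ := Finset.mem_filter.mp hp
        exact Finset.mem_product.mpr ⟨Finset.mem_compl.mpr h1, h2⟩
    _ = Sᶜ.card * T.card := Finset.card_product Sᶜ T

lemma fact_sub (n : ℕ) (G : Finset (Fin n × Fin n)) (S T : Finset (Fin n)) :
    (G.filter (fun p => p.1 ∈ S ∧ p.2 ∉ T)).card ≤ (G.filter (fun p => p.2 ∈ Tᶜ)).card := by
  apply Finset.card_le_card
  intro p hp
  obtain ⟨hG, -, h2⟩ := Finset.mem_filter.mp hp
  exact Finset.mem_filter.mpr ⟨hG, Finset.mem_compl.mpr h2⟩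

lemma fact_sub' (n : ℕ) (G : Finset (Fin n × Fin n)) (S T : Finset (Fin n)) :
    (G.filter (fun p => p.1 ∉ S ∧ p.2 ∈ T)).card ≤ (G.filter (fun p => p.1 ∈ Sᶜ)).card := by
  apply Finset.card_le_card
  intro p hp
  obtain ⟨hG, h1, -⟩ := Finset.mem_filter.mp hp
  exact Finset.mem_filter.mpr ⟨hG, Finset.mem_compl.mpr h1⟩




lemma sum_degL (n : ℕ) (G : Finset (Fin n × Fin n)) (S : Finset (Fin n)) :
    ∑ a ∈ S, degL n G a = (G.filter (fun p => p.1 ∈ S)).card := by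
  rw [Finset.card_eq_sum_card_fiberwise (f := Prod.fst) (s := G.filter (fun p => p.1 ∈ S)) (t := S)
    (fun x hx => (Finset.mem_filter.mp hx).2)]
  refine Finset.sum_congr rfl fun a ha => ?_
  rw [degL, Finset.filter_filter]
  congr 1
  ext p
  simp only [Finset.mem_filter, and_assoc]
  refine ⟨fun h => ⟨h.1, h.2.symm ▸ ha, h.2⟩, fun h => ⟨h.1, h.2.2⟩⟩

lemma sum_degR (n : ℕ) (G : Finset (Fin n × Fin n)) (T : Finset (Fin n)) :
    ∑ b ∈ T, degR n G b = (G.filter (fun p => p.2 ∈ T)).card := by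
  rw [Finset.card_eq_sum_card_fiberwise (f := Prod.snd) (s := G.filter (fun p => p.2 ∈ T)) (t := T)
    (fun x hx => (Finset.mem_filter.mp hx).2)]
  refine Finset.sum_congr rfl fun b hb => ?_
  rw [degR, Finset.filter_filter]
  congr 1
  ext p
  simp only [Finset.mem_filter, and_assoc]
  refine ⟨fun h => ⟨h.1, h.2.symm ▸ hb, h.2⟩, fun h => ⟨h.1, h.2.2⟩⟩

abbrev Lt (n r : ℕ) (G : Finset (Fin n × Fin n)) :=
  {p // p ∈ G} ⊕ ((b : Fin n) × Fin (degR n G b - r))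

abbrev Rt (n r : ℕ) (G : Finset (Fin n × Fin n)) :=
  {p // p ∈ G} ⊕ ((a : Fin n) × Fin (degL n G a - r))

def nbr (n r : ℕ) (G : Finset (Fin n × Fin n)) : Lt n r G → Finset (Rt n r G)
  | Sum.inl e => insert (Sum.inl e)
      ((Finset.univ.filter (fun x : ((a : Fin n) × Fin (degL n G a - r)) => x.1 = e.1.1)).image Sum.inr)
  | Sum.inr x => (G.attach.filter (fun e => e.1.2 = x.1)).image Sum.inl

lemma hall_cond (n r : ℕ) (G : Finset (Fin n × Fin n))
    (hra : ∀ a, r ≤ degL n G a) (hrb : ∀ b, r ≤ degR n G b)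
    (cc : ∀ S T : Finset (Fin n),
      r * (S.card + T.card) ≤ r * n + (G.filter (fun p => p.1 ∈ S ∧ p.2 ∈ T)).card) :
    ∀ X : Finset (Lt n r G), X.card ≤ (X.biUnion (nbr n r G)).card := by
  intro X
  classical
  set XL := X.toLeft with hXL
  set XD := X.toRight with hXD
  set S : Finset (Fin n) := XL.image (fun e => e.1.1) with hS
  set U : Finset (Fin n) := XD.image (fun x => x.1) with hU
  set Q : Finset {p // p ∈ G} := G.attach.filter (fun e => e.1.2 ∈ U) with hQ
  set Y1l : Finset {p // p ∈ G} := XL ∪ Q with hY1l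
  set Y1r : Finset ((a : Fin n) × Fin (degL n G a - r)) :=
    Finset.univ.filter (fun x => x.1 ∈ S) with hY1r
  -- the union is inside the biUnion
  have hsub : Y1l.image Sum.inl ∪ Y1r.image Sum.inr ⊆ X.biUnion (nbr n r G) := by
    intro y hy
    rcases Finset.mem_union.mp hy with hy | hy
    · obtain ⟨e, he, rfl⟩ := Finset.mem_image.mp hy
      rcases Finset.mem_union.mp he with he | he
      · exact Finset.mem_biUnion.mpr ⟨Sum.inl e, Finset.mem_toLeft.mp he,
          by simp [nbr]⟩
      · obtain ⟨-, hb⟩ := Finset.mem_filter.mp he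
        obtain ⟨x, hx, hxb⟩ := Finset.mem_image.mp hb
        exact Finset.mem_biUnion.mpr ⟨Sum.inr x, Finset.mem_toRight.mp hx,
          by simp [nbr, hxb]⟩
    · obtain ⟨x, hx, rfl⟩ := Finset.mem_image.mp hy
      obtain ⟨-, ha⟩ := Finset.mem_filter.mp hx
      obtain ⟨e, he, hea⟩ := Finset.mem_image.mp ha
      exact Finset.mem_biUnion.mpr ⟨Sum.inl e, Finset.mem_toLeft.mp he,
        by simp [nbr, hea]⟩
  have hdisj : Disjoint (Y1l.image Sum.inl) (Y1r.image (Sum.inr : _ → Rt n r G)) := by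
    simp only [Finset.disjoint_left, Finset.mem_image]
    rintro y ⟨e, -, rfl⟩ ⟨x, -, h⟩
    exact Sum.inl_ne_inr h.symm
  have hcard1 : (Y1l.image Sum.inl ∪ Y1r.image (Sum.inr : _ → Rt n r G)).card
      = Y1l.card + Y1r.card := by
    rw [Finset.card_union_of_disjoint hdisj,
      Finset.card_image_of_injective _ Sum.inl_injective,
      Finset.card_image_of_injective _ Sum.inr_injective]
  have hY1r_card : Y1r.card = ∑ a ∈ S, (degL n G a - r) := by
    have h1 : Y1r = S.sigma (fun _ => Finset.univ) := by
      ext x; simp [hY1r, Finset.mem_sigma]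
    rw [h1, Finset.card_sigma]
    simp
  have hXD_le : XD.card ≤ ∑ b ∈ U, (degR n G b - r) := by
    have hsub2 : XD ⊆ U.sigma (fun _ => Finset.univ) := fun x hx =>
      Finset.mem_sigma.mpr ⟨Finset.mem_image_of_mem _ hx, Finset.mem_univ _⟩
    calc XD.card ≤ (U.sigma (fun _ => Finset.univ)).card := Finset.card_le_card hsub2
      _ = ∑ b ∈ U, (degR n G b - r) := by rw [Finset.card_sigma]; simp
  have hQcard : Q.card = ∑ b ∈ U, degR n G b := by
    rw [sum_degR, ← Finset.card_image_of_injective Q Subtype.val_injective]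
    congr 1
    ext p
    simp only [hQ, Finset.mem_image, Finset.mem_filter, Finset.mem_attach, true_and]
    constructor
    · rintro ⟨e, he, rfl⟩; exact ⟨e.2, he⟩
    · rintro ⟨hp, hu⟩; exact ⟨⟨p, hp⟩, hu, rfl⟩
  have hinter_le : (XL ∩ Q).card ≤ (G.filter (fun p => p.1 ∈ S ∧ p.2 ∈ U)).card := by
    rw [← Finset.card_image_of_injective (XL ∩ Q) Subtype.val_injective]
    apply Finset.card_le_card
    intro p hp
    obtain ⟨e, he, rfl⟩ := Finset.mem_image.mp hp
    obtain ⟨heL, heQ⟩ := Finset.mem_inter.mp he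
    refine Finset.mem_filter.mpr ⟨e.2, ?_, (Finset.mem_filter.mp heQ).2⟩
    exact Finset.mem_image.mpr ⟨e, heL, rfl⟩
  have hunion_card : Y1l.card + (XL ∩ Q).card = XL.card + Q.card :=
    Finset.card_union_add_card_inter XL Q
  have hsplit : (G.filter (fun p => p.1 ∈ S ∧ p.2 ∈ U)).card
      + (G.filter (fun p => p.1 ∈ S ∧ p.2 ∉ U)).card = ∑ a ∈ S, degL n G a := by
    rw [sum_degL, ← Finset.filter_filter, ← Finset.filter_filter]
    exact Finset.card_filter_add_card_filter_not (fun p : Fin n × Fin n => p.2 ∈ U)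
  have hU_le : U.card ≤ n := by
    simpa using Finset.card_le_univ U
  have hcc' : r * (S.card + (n - U.card)) ≤ r * n
      + (G.filter (fun p => p.1 ∈ S ∧ p.2 ∉ U)).card := by
    have h := cc S Uᶜ
    simpa [Finset.card_compl, Finset.mem_compl] using h
  have hsumU : (∑ b ∈ U, (degR n G b - r)) + r * U.card = ∑ b ∈ U, degR n G b := by
    calc (∑ b ∈ U, (degR n G b - r)) + r * U.card
        = ∑ b ∈ U, ((degR n G b - r) + r) := by
          rw [Finset.sum_add_distrib, Finset.sum_const, smul_eq_mul, mul_comm]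
      _ = ∑ b ∈ U, degR n G b := Finset.sum_congr rfl fun b _ => Nat.sub_add_cancel (hrb b)
  have hsumS : (∑ a ∈ S, (degL n G a - r)) + r * S.card = ∑ a ∈ S, degL n G a := by
    calc (∑ a ∈ S, (degL n G a - r)) + r * S.card
        = ∑ a ∈ S, ((degL n G a - r) + r) := by
          rw [Finset.sum_add_distrib, Finset.sum_const, smul_eq_mul, mul_comm]
      _ = ∑ a ∈ S, degL n G a := Finset.sum_congr rfl fun a _ => Nat.sub_add_cancel (hra a)
  have hmul : r * (S.card + (n - U.card)) + r * U.card = r * S.card + r * n := by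
    rw [← Nat.mul_add, add_assoc, Nat.sub_add_cancel hU_le, Nat.mul_add]
  have hX : XL.card + XD.card = X.card := Finset.card_toLeft_add_card_toRight (u := X)
  have hfinal : X.card ≤ Y1l.card + Y1r.card := by
    rw [← hX, hY1r_card]
    linarith [hXD_le, hQcard, hinter_le, hunion_card, hsplit, hcc', hsumU, hsumS, hmul]
  calc X.card ≤ Y1l.card + Y1r.card := hfinal
    _ = (Y1l.image Sum.inl ∪ Y1r.image (Sum.inr : _ → Rt n r G)).card := hcard1.symm
    _ ≤ (X.biUnion (nbr n r G)).card := Finset.card_le_card hsub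

lemma sigma_fiber_card {n : ℕ} (g : Fin n → ℕ) (a : Fin n) :
    (Finset.univ.filter (fun x : ((i : Fin n) × Fin (g i)) => x.1 = a)).card = g a := by
  have h : (Finset.univ.filter (fun x : ((i : Fin n) × Fin (g i)) => x.1 = a))
      = ({a} : Finset (Fin n)).sigma (fun _ => Finset.univ) := by
    ext x; simp [Finset.mem_sigma]
  rw [h, Finset.card_sigma, Finset.sum_singleton]
  simp

lemma attach_filter_image {n : ℕ} (G : Finset (Fin n × Fin n))
    (p : {x // x ∈ G} → Prop) [DecidablePred p] (q : (Fin n × Fin n) → Prop) [DecidablePred q]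
    (hpq : ∀ e : {x // x ∈ G}, p e ↔ q e.1) :
    (G.attach.filter p).image Subtype.val = G.filter q := by
  ext x
  simp only [Finset.mem_image, Finset.mem_filter, Finset.mem_attach, true_and]
  constructor
  · rintro ⟨e, he, rfl⟩; exact ⟨e.2, (hpq e).mp he⟩
  · rintro ⟨hx, hq⟩; exact ⟨⟨x, hx⟩, (hpq ⟨x, hx⟩).mpr hq, rfl⟩

lemma exists_factor_of_cc (n r : ℕ) (G : Finset (Fin n × Fin n))
    (hra : ∀ a, r ≤ degL n G a) (hrb : ∀ b, r ≤ degR n G b)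
    (cc : ∀ S T : Finset (Fin n),
      r * (S.card + T.card) ≤ r * n + (G.filter (fun p => p.1 ∈ S ∧ p.2 ∈ T)).card) :
    ∃ F, IsFactor n G F r := by
  classical
  obtain ⟨f, hfinj, hf⟩ :=
    (Finset.all_card_le_biUnion_card_iff_exists_injective (nbr n r G)).mp
      (hall_cond n r G hra hrb cc)
  have hGL : ∑ a, degL n G a = G.card := by
    rw [sum_degL]; congr 1; simp
  have hGR : ∑ b, degR n G b = G.card := by
    rw [sum_degR]; congr 1; simp
  have hsubL : (∑ a, (degL n G a - r)) + n * r = G.card := by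
    have h : (∑ a, (degL n G a - r)) + n * r = ∑ a, ((degL n G a - r) + r) := by
      rw [Finset.sum_add_distrib, Finset.sum_const, smul_eq_mul]
      simp
    rw [h, Finset.sum_congr rfl fun a _ => Nat.sub_add_cancel (hra a), hGL]
  have hsubR : (∑ b, (degR n G b - r)) + n * r = G.card := by
    have h : (∑ b, (degR n G b - r)) + n * r = ∑ b, ((degR n G b - r) + r) := by
      rw [Finset.sum_add_distrib, Finset.sum_const, smul_eq_mul]
      simp
    rw [h, Finset.sum_congr rfl fun b _ => Nat.sub_add_cancel (hrb b), hGR]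
  have hcardLR : Fintype.card (Lt n r G) = Fintype.card (Rt n r G) := by
    simp only [Fintype.card_sum, Fintype.card_sigma, Fintype.card_coe, Fintype.card_fin]
    omega
  have hfbij : Function.Bijective f := (Fintype.bijective_iff_injective_and_card f).mpr
    ⟨hfinj, hcardLR⟩
  have hstruct : ∀ e : {p // p ∈ G}, f (Sum.inl e) = Sum.inl e ∨
      ∃ i, f (Sum.inl e) = Sum.inr ⟨e.1.1, i⟩ := by
    intro e
    have h := hf (Sum.inl e)
    simp only [nbr, Finset.mem_insert, Finset.mem_image, Finset.mem_filter,
      Finset.mem_univ, true_and] at h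
    rcases h with h | ⟨x, hx1, hx2⟩
    · exact Or.inl h
    · rcases x with ⟨a, i⟩
      cases hx1
      exact Or.inr ⟨i, hx2.symm⟩
  have hstructD : ∀ y : ((b : Fin n) × Fin (degR n G b - r)),
      ∃ e : {p // p ∈ G}, f (Sum.inr y) = Sum.inl e ∧ e.1.2 = y.1 := by
    intro y
    have h := hf (Sum.inr y)
    simp only [nbr, Finset.mem_image, Finset.mem_filter, Finset.mem_attach, true_and] at h
    obtain ⟨e, he, he2⟩ := h
    exact ⟨e, he2.symm, he⟩
  set F : Finset (Fin n × Fin n) :=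
    (G.attach.filter (fun e => f (Sum.inl e) = Sum.inl e)).image Subtype.val with hF
  have hFmem : ∀ p : Fin n × Fin n, p ∈ F ↔ ∃ h : p ∈ G, f (Sum.inl ⟨p, h⟩) = Sum.inl ⟨p, h⟩ := by
    intro p
    rw [hF]
    constructor
    · intro hp
      obtain ⟨e, he, rfl⟩ := Finset.mem_image.mp hp
      exact ⟨e.2, (Finset.mem_filter.mp he).2⟩
    · rintro ⟨hp, hfp⟩
      exact Finset.mem_image.mpr ⟨⟨p, hp⟩,
        Finset.mem_filter.mpr ⟨Finset.mem_attach _ _, hfp⟩, rfl⟩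
  have hFG : F ⊆ G := by
    intro p hp
    obtain ⟨hp1, -⟩ := (hFmem p).mp hp
    exact hp1
  refine ⟨F, hFG, ?_, ?_⟩
  · -- left degrees
    intro a
    set C := G.attach.filter (fun e => e.1.1 = a) with hC
    have hCcard : C.card = degL n G a := by
      rw [degL, ← attach_filter_image G _ (fun p => p.1 = a) (fun e => Iff.rfl),
        Finset.card_image_of_injective _ Subtype.val_injective]
    set D := C.filter (fun e => ¬ f (Sum.inl e) = Sum.inl e) with hD
    set Cf := C.filter (fun e => f (Sum.inl e) = Sum.inl e) with hCf
    have hCD : Cf.card + D.card = C.card :=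
      Finset.card_filter_add_card_filter_not (fun e => f (Sum.inl e) = Sum.inl e)
    have himg : D.image (fun e => f (Sum.inl e))
        = (Finset.univ.filter (fun x : ((a' : Fin n) × Fin (degL n G a' - r)) => x.1 = a)).image
            Sum.inr := by
      ext y
      constructor
      · intro hy
        obtain ⟨e, heD, rfl⟩ := Finset.mem_image.mp hy
        have h1 := Finset.mem_filter.mp heD
        have h2 := (Finset.mem_filter.mp h1.1).2
        rcases hstruct e with h | ⟨i, h⟩
        · exact absurd h h1.2
        · rw [h]
          exact Finset.mem_image.mpr ⟨⟨e.1.1, i⟩,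
            Finset.mem_filter.mpr ⟨Finset.mem_univ _, h2⟩, rfl⟩
      · intro hy
        obtain ⟨x, hx, rfl⟩ := Finset.mem_image.mp hy
        have hx1 := (Finset.mem_filter.mp hx).2
        obtain ⟨l, hl⟩ := hfbij.2 (Sum.inr x)
        rcases l with e | y'
        · have hne : ¬ f (Sum.inl e) = Sum.inl e := by rw [hl]; simp
          have hea : e.1.1 = a := by
            rcases hstruct e with h | ⟨i, h⟩
            · exact absurd h hne
            · rw [h] at hl
              have h3 : e.1.1 = x.1 := congrArg Sigma.fst (Sum.inr_injective hl)
              rw [h3, hx1]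
          exact Finset.mem_image.mpr ⟨e, Finset.mem_filter.mpr
            ⟨Finset.mem_filter.mpr ⟨Finset.mem_attach _ _, hea⟩, hne⟩, hl⟩
        · obtain ⟨e, he, -⟩ := hstructD y'
          rw [he] at hl
          exact absurd hl (by simp)
    have hDcard : D.card = degL n G a - r := by
      have h1 : (D.image (fun e => f (Sum.inl e))).card = D.card :=
        Finset.card_image_of_injective _
          (show Function.Injective (fun e => f (Sum.inl e)) from
            fun u v h => Sum.inl_injective (hfinj h))
      rw [← h1, himg, Finset.card_image_of_injective _ Sum.inr_injective,
        sigma_fiber_card (fun a' => degL n G a' - r) a]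
    have hdegF : degL n F a = Cf.card := by
      rw [degL, ← Finset.card_image_of_injective Cf Subtype.val_injective]
      congr 1
      ext p
      constructor
      · intro hp
        have hp1 := (Finset.mem_filter.mp hp).1
        have hp2 := (Finset.mem_filter.mp hp).2
        obtain ⟨hpG, hfp⟩ := (hFmem p).mp hp1
        exact Finset.mem_image.mpr ⟨⟨p, hpG⟩, Finset.mem_filter.mpr
          ⟨Finset.mem_filter.mpr ⟨Finset.mem_attach _ _, hp2⟩, hfp⟩, rfl⟩
      · intro hp
        obtain ⟨e, he, rfl⟩ := Finset.mem_image.mp hp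
        have h1 := Finset.mem_filter.mp he
        have h2 := Finset.mem_filter.mp h1.1
        exact Finset.mem_filter.mpr ⟨(hFmem e.1).mpr ⟨e.2, by
          convert h1.2 <;> exact rfl⟩, h2.2⟩
    have := hra a
    omega
  · -- right degrees
    intro b
    set C := G.attach.filter (fun e => e.1.2 = b) with hC
    have hCcard : C.card = degR n G b := by
      rw [degR, ← attach_filter_image G _ (fun p => p.2 = b) (fun e => Iff.rfl),
        Finset.card_image_of_injective _ Subtype.val_injective]
    set D := C.filter (fun e => ¬ f (Sum.inl e) = Sum.inl e) with hD
    set Cf := C.filter (fun e => f (Sum.inl e) = Sum.inl e) with hCf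
    have hCD : Cf.card + D.card = C.card :=
      Finset.card_filter_add_card_filter_not (fun e => f (Sum.inl e) = Sum.inl e)
    have himg : D.image (fun e => (Sum.inl e : Rt n r G))
        = (Finset.univ.filter (fun y : ((b' : Fin n) × Fin (degR n G b' - r)) => y.1 = b)).image
            (fun y => f (Sum.inr y)) := by
      ext z
      constructor
      · intro hz
        obtain ⟨e, heD, rfl⟩ := Finset.mem_image.mp hz
        have h1 := Finset.mem_filter.mp heD
        have heb := (Finset.mem_filter.mp h1.1).2
        obtain ⟨l, hl⟩ := hfbij.2 (Sum.inl e)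
        rcases l with e' | y
        · exfalso
          rcases hstruct e' with h | ⟨i, h⟩
          · rw [h] at hl
            exact h1.2 (by rwa [Sum.inl_injective hl] at h)
          · rw [h] at hl
            exact Sum.inr_ne_inl hl
        · obtain ⟨e'', he'', heq⟩ := hstructD y
          have hee : e'' = e := Sum.inl_injective (he''.symm.trans hl)
          refine Finset.mem_image.mpr ⟨y, Finset.mem_filter.mpr
            ⟨Finset.mem_univ _, ?_⟩, hl⟩
          rw [← heq, hee, heb]
      · intro hz
        obtain ⟨y, hy, rfl⟩ := Finset.mem_image.mp hz
        have hy1 := (Finset.mem_filter.mp hy).2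
        obtain ⟨e, he, heq⟩ := hstructD y
        rw [he]
        have hne : ¬ f (Sum.inl e) = Sum.inl e := by
          intro hcon
          have h2 : (Sum.inl e : Lt n r G) = Sum.inr y := hfinj (hcon.trans he.symm)
          exact Sum.inl_ne_inr h2
        exact Finset.mem_image.mpr ⟨e, Finset.mem_filter.mpr
          ⟨Finset.mem_filter.mpr ⟨Finset.mem_attach _ _, by rw [heq, hy1]⟩, hne⟩, rfl⟩
    have hDcard : D.card = degR n G b - r := by
      have h1 : (D.image (fun e => (Sum.inl e : Rt n r G))).card = D.card :=
        Finset.card_image_of_injective _ Sum.inl_injective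
      have h2 : ((Finset.univ.filter
          (fun y : ((b' : Fin n) × Fin (degR n G b' - r)) => y.1 = b)).image
            (fun y => f (Sum.inr y))).card = degR n G b - r := by
        rw [Finset.card_image_of_injective _
            (show Function.Injective (fun y => f (Sum.inr y)) from
              fun u v h => Sum.inr_injective (hfinj h)),
          sigma_fiber_card (fun b' => degR n G b' - r) b]
      rw [← h1, himg, h2]
    have hdegF : degR n F b = Cf.card := by
      rw [degR, ← Finset.card_image_of_injective Cf Subtype.val_injective]
      congr 1
      ext p
      constructor
      · intro hp
        have hp1 := (Finset.mem_filter.mp hp).1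
        have hp2 := (Finset.mem_filter.mp hp).2
        obtain ⟨hpG, hfp⟩ := (hFmem p).mp hp1
        exact Finset.mem_image.mpr ⟨⟨p, hpG⟩, Finset.mem_filter.mpr
          ⟨Finset.mem_filter.mpr ⟨Finset.mem_attach _ _, hp2⟩, hfp⟩, rfl⟩
      · intro hp
        obtain ⟨e, he, rfl⟩ := Finset.mem_image.mp hp
        have h1 := Finset.mem_filter.mp he
        have h2 := Finset.mem_filter.mp h1.1
        exact Finset.mem_filter.mpr ⟨(hFmem e.1).mpr ⟨e.2, by
          convert h1.2 <;> exact rfl⟩, h2.2⟩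
    have := hrb b
    omega

set_option maxHeartbeats 1000000 in

lemma keyB (α q n s m e r : ℝ) (hα : 1 / 2 < α) (hq0 : 0 < q)
    (hqle : q ≤ (α - 1/2) / 2) (hεq : q * q ≤ q)
    (hn : 1 ≤ n) (hm0 : 0 < m) (hms : m ≤ s) (hs2 : 2 * s ≤ n + m)
    (hmq : m ≤ q * n / 10) (hr0 : 0 ≤ r) (hrn : r ≤ n)
    (hrd : r ≤ (α - q * q) * n)
    (hA : (α - q * q) * n * s ≤ e + s * (s - m)) :
    r * m ≤ e := by
  set δ := (α - q * q) * n with hδ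
  set M := (n + m) / 2 with hM
  have hc : 0 < α - 1/2 := by linarith
  have hn0 : (0:ℝ) ≤ n := by linarith
  have hq2 : q * q ≤ (α - 1/2) / 2 := le_trans hεq hqle
  have hqn : q * n ≤ ((α - 1/2) / 2) * n := mul_le_mul_of_nonneg_right hqle hn0
  have hδhalf : ((α - 1/2) / 2) * n ≤ δ - n / 2 := by
    rw [hδ]; nlinarith
  have hMn : n / 2 ≤ M := by rw [hM]; linarith
  have hgm : 0 ≤ m * (δ - r) := mul_nonneg (le_of_lt hm0) (by linarith)
  have hrm : r * m ≤ ((α - 1/2) / 2) * n * n / 10 := by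
    have e1 : r * m ≤ n * m := mul_le_mul_of_nonneg_right hrn (le_of_lt hm0)
    have e2 : n * m ≤ n * (q * n / 10) := mul_le_mul_of_nonneg_left hmq hn0
    have e3 : n * (q * n / 10) ≤ n * (((α - 1/2) / 2) * n / 10) := by
      apply mul_le_mul_of_nonneg_left _ hn0
      linarith
    calc r * m ≤ n * m := e1
      _ ≤ n * (q * n / 10) := e2
      _ ≤ n * (((α - 1/2) / 2) * n / 10) := e3
      _ = ((α - 1/2) / 2) * n * n / 10 := by ring
  have hgM : 0 ≤ M * (δ + m - M) - r * m := by
    have h1 : ((α - 1/2) / 2) * n ≤ δ + m - M := by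
      rw [hM]; linarith
    have h2 : (n/2) * (((α - 1/2) / 2) * n) ≤ M * (δ + m - M) :=
      mul_le_mul hMn h1 (by positivity) (by linarith)
    nlinarith [mul_nonneg (mul_nonneg (by linarith : (0:ℝ) ≤ (α - 1/2) / 2) hn0) hn0]
  have hident : (M - m) * (s * (δ + m - s) - r * m)
      = (M - s) * (m * (δ - r)) + (s - m) * (M * (δ + m - M) - r * m)
        + (s - m) * (M - s) * (M - m) := by ring
  have hsM : s ≤ M := by rw [hM]; linarith
  have hg : 0 ≤ s * (δ + m - s) - r * m := by
    rcases eq_or_lt_of_le hms with heq | hlt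
    · rw [← heq]
      nlinarith
    · have hMm : m < M := lt_of_lt_of_le hlt hsM
      have hnum : 0 ≤ (M - m) * (s * (δ + m - s) - r * m) := by
        rw [hident]
        have t1 : 0 ≤ (M - s) * (m * (δ - r)) := mul_nonneg (by linarith) hgm
        have t2 : 0 ≤ (s - m) * (M * (δ + m - M) - r * m) := mul_nonneg (by linarith) hgM
        have t3 : 0 ≤ (s - m) * (M - s) * (M - m) :=
          mul_nonneg (mul_nonneg (by linarith) (by linarith)) (by linarith)
        linarith
      by_contra hcon
      push_neg at hcon
      have hneg : (M - m) * (s * (δ + m - s) - r * m) < 0 :=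
        mul_neg_of_pos_of_neg (sub_pos.mpr hMm) (by linarith)
      linarith
  nlinarith [hA, hg, sq_nonneg s]

set_option maxHeartbeats 1000000 in
lemma real_key (α ε n s t e r : ℝ) (hα : 1 / 2 < α) (hε : 0 < ε) (hε1 : ε ≤ 1)
    (hsq : Real.sqrt ε ≤ (α - 1/2) / 2)
    (hn : 1 ≤ n) (hs0 : 0 ≤ s) (hsn : s ≤ n) (ht0 : 0 ≤ t) (htn : t ≤ n) (he : 0 ≤ e)
    (hr0 : 0 ≤ r) (hr : r ≤ (α - 10 * Real.sqrt ε) * n) (hrn : r ≤ n)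
    (A1 : (α - ε) * n * s ≤ e + s * (n - t)) (A1' : (α - ε) * n * t ≤ e + t * (n - s))
    (A2 : (α - ε) * n * s ≤ e + (n - t) * ((α + ε) * n))
    (A2' : (α - ε) * n * t ≤ e + (n - s) * ((α + ε) * n)) :
    r * (s + t) ≤ r * n + e := by
  set q := Real.sqrt ε with hqdef
  have hq0 : 0 < q := Real.sqrt_pos.mpr hε
  have hqq : q * q = ε := Real.mul_self_sqrt hε.le
  have hq1 : q ≤ 1 := by rw [hqdef]; exact Real.sqrt_le_one.mpr hε1
  have hεq : q * q ≤ q := by nlinarith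
  set m := s + t - n with hm
  have hsplit : r * (s + t) = r * n + r * m := by rw [hm]; ring
  rw [hsplit]
  rcases le_or_gt m 0 with hm0 | hm0
  · have : r * m ≤ 0 := mul_nonpos_of_nonneg_of_nonpos hr0 hm0
    linarith
  have hn0 : (0:ℝ) ≤ n := by linarith
  rcases le_or_gt (q * n / 10) m with hcase | hcase
  · -- large m: use averaged bound
    have h2e : 2 * α * n * m - 2 * ε * n * n ≤ 2 * e := by
      have hsum := add_le_add A2 A2'
      have hexp : (α - ε) * n * s + (α - ε) * n * t
          = (α - ε) * n * (n + m) := by rw [hm]; ring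
      have hexp2 : e + (n - t) * ((α + ε) * n) + (e + (n - s) * ((α + ε) * n))
          = 2 * e + (n - m) * ((α + ε) * n) := by rw [hm]; ring
      rw [hexp, hexp2] at hsum
      nlinarith [hsum]
    have h1 : r * m ≤ (α - 10 * q) * n * m := mul_le_mul_of_nonneg_right hr hm0.le
    have h2 : 10 * q * n * (q * n / 10) ≤ 10 * q * n * m :=
      mul_le_mul_of_nonneg_left hcase (by positivity)
    have h2' : ε * n * n ≤ 10 * q * n * m := by
      calc ε * n * n = 10 * q * n * (q * n / 10) := by rw [← hqq]; ring
        _ ≤ 10 * q * n * m := h2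
    have hrm : r * m ≤ α * n * m - ε * n * n := by nlinarith [h1, h2']
    linarith
  · -- small m
    have hrd : r ≤ (α - q * q) * n := by nlinarith [hr, hq0, hn0]
    have hmq : m ≤ q * n / 10 := le_of_lt hcase
    rcases le_total s t with hst | hst
    · have hms : m ≤ s := by rw [hm]; linarith
      have hs2 : 2 * s ≤ n + m := by rw [hm]; linarith
      have hA : (α - q * q) * n * s ≤ e + s * (s - m) := by
        have hnt : s * (n - t) = s * (s - m) := by rw [hm]; ring
        rw [← hnt, hqq]
        exact A1
      have := keyB α q n s m e r hα hq0 hsq hεq hn hm0 hms hs2 hmq hr0 hrn hrd hA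
      linarith
    · have hms : m ≤ t := by rw [hm]; linarith
      have hs2 : 2 * t ≤ n + m := by rw [hm]; linarith
      have hA : (α - q * q) * n * t ≤ e + t * (t - m) := by
        have hnt : t * (n - s) = t * (t - m) := by rw [hm]; ring
        rw [← hnt, hqq]
        exact A1'
      have := keyB α q n t m e r hα hq0 hsq hεq hn hm0 hms hs2 hmq hr0 hrn hrd hA
      linarith


set_option maxHeartbeats 1000000 in
theorem factor_in_almost_regular (α : ℝ) (hα : 1 / 2 < α) :
    ∃ ε₀ : ℝ, 0 < ε₀ ∧ ∃ n₀ : ℕ, ∀ n : ℕ, n₀ ≤ n →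
      ∀ ε : ℝ, 0 < ε → ε ≤ ε₀ →
      ∀ G : Finset (Fin n × Fin n),
        (∀ a : Fin n, (α - ε) * n ≤ (degL n G a : ℝ) ∧ (degL n G a : ℝ) ≤ (α + ε) * n) →
        (∀ b : Fin n, (α - ε) * n ≤ (degR n G b : ℝ) ∧ (degR n G b : ℝ) ≤ (α + ε) * n) →
        ∀ r : ℕ, (r : ℝ) ≤ (α - 10 * Real.sqrt ε) * n →
          ∃ F, IsFactor n G F r := by
  have hc : 0 < α - 1/2 := by linarith
  refine ⟨min ((α - 1/2)^2/4) 1, by positivity, 1, ?_⟩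
  intro n hn ε hε hε0 G hL hR r hr
  have hε1 : ε ≤ 1 := le_trans hε0 (min_le_right _ _)
  have hεsq : ε ≤ (α - 1/2)^2/4 := le_trans hε0 (min_le_left _ _)
  have hsq : Real.sqrt ε ≤ (α - 1/2)/2 := by
    calc Real.sqrt ε ≤ Real.sqrt ((α - 1/2)^2/4) := Real.sqrt_le_sqrt hεsq
      _ = (α - 1/2)/2 := by
          rw [show (α - 1/2)^2/4 = ((α - 1/2)/2)^2 by ring, Real.sqrt_sq (by linarith)]
  have hn1 : (1:ℝ) ≤ (n:ℝ) := by exact_mod_cast hn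
  have hn0 : (0:ℝ) ≤ (n:ℝ) := by linarith
  have hq1 : Real.sqrt ε ≤ 1 := Real.sqrt_le_one.mpr hε1
  have hqq : Real.sqrt ε * Real.sqrt ε = ε := Real.mul_self_sqrt hε.le
  have h10 : ε ≤ 10 * Real.sqrt ε := by nlinarith [Real.sqrt_nonneg ε]
  have hrεn : (r:ℝ) ≤ (α - ε) * n := by
    refine le_trans hr ?_
    apply mul_le_mul_of_nonneg_right _ hn0
    linarith
  have hra : ∀ a, r ≤ degL n G a := by
    intro a
    have h2 := le_trans hrεn (hL a).1
    exact_mod_cast h2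
  have hrb : ∀ b, r ≤ degR n G b := by
    intro b
    have h2 := le_trans hrεn (hR b).1
    exact_mod_cast h2
  have hr0 : (0:ℝ) ≤ (r:ℝ) := Nat.cast_nonneg r
  have hrnat : r ≤ n := by
    have a0 : Fin n := ⟨0, by omega⟩
    exact le_trans (hra a0) (degL_le n G a0)
  have hrn : (r:ℝ) ≤ (n:ℝ) := by exact_mod_cast hrnat
  have cc : ∀ S T : Finset (Fin n),
      r * (S.card + T.card) ≤ r * n + (G.filter (fun p => p.1 ∈ S ∧ p.2 ∈ T)).card := by
    intro S T
    have hsn' : S.card ≤ n := by simpa using Finset.card_le_univ S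
    have htn' : T.card ≤ n := by simpa using Finset.card_le_univ T
    have hsn : ((S.card : ℕ) : ℝ) ≤ (n:ℝ) := by exact_mod_cast hsn'
    have htn : ((T.card : ℕ) : ℝ) ≤ (n:ℝ) := by exact_mod_cast htn'
    have hTc : ((Tᶜ.card : ℕ) : ℝ) = (n:ℝ) - T.card := by
      rw [Finset.card_compl]
      simp only [Fintype.card_fin]
      rw [Nat.cast_sub htn']
    have hSc : ((Sᶜ.card : ℕ) : ℝ) = (n:ℝ) - S.card := by
      rw [Finset.card_compl]
      simp only [Fintype.card_fin]
      rw [Nat.cast_sub hsn']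
    set eST : ℕ := (G.filter (fun p => p.1 ∈ S ∧ p.2 ∈ T)).card with heST
    -- lower bounds on sums of degrees
    have sumS_lb : (α - ε) * n * S.card ≤ ((G.filter (fun p => p.1 ∈ S)).card : ℝ) := by
      have h1 : (α - ε) * n * S.card = ∑ _a ∈ S, (α - ε) * n := by
        rw [Finset.sum_const, nsmul_eq_mul]; ring
      have h2 : ∑ a ∈ S, ((degL n G a : ℝ)) = ((G.filter (fun p => p.1 ∈ S)).card : ℝ) := by
        rw [← sum_degL]; push_cast; rfl
      rw [h1, ← h2]
      exact Finset.sum_le_sum (fun a _ => (hL a).1)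
    have sumT_lb : (α - ε) * n * T.card ≤ ((G.filter (fun p => p.2 ∈ T)).card : ℝ) := by
      have h1 : (α - ε) * n * T.card = ∑ _b ∈ T, (α - ε) * n := by
        rw [Finset.sum_const, nsmul_eq_mul]; ring
      have h2 : ∑ b ∈ T, ((degR n G b : ℝ)) = ((G.filter (fun p => p.2 ∈ T)).card : ℝ) := by
        rw [← sum_degR]; push_cast; rfl
      rw [h1, ← h2]
      exact Finset.sum_le_sum (fun b _ => (hR b).1)
    have sumTc_ub : ((G.filter (fun p => p.2 ∈ Tᶜ)).card : ℝ) ≤ ((n:ℝ) - T.card) * ((α + ε) * n) := by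
      have h2 : ∑ b ∈ Tᶜ, ((degR n G b : ℝ)) = ((G.filter (fun p => p.2 ∈ Tᶜ)).card : ℝ) := by
        rw [← sum_degR]; push_cast; rfl
      rw [← h2, ← hTc]
      calc ∑ b ∈ Tᶜ, ((degR n G b : ℝ)) ≤ ∑ _b ∈ Tᶜ, (α + ε) * n :=
            Finset.sum_le_sum (fun b _ => (hR b).2)
        _ = (Tᶜ.card : ℝ) * ((α + ε) * n) := by rw [Finset.sum_const, nsmul_eq_mul]
    have sumSc_ub : ((G.filter (fun p => p.1 ∈ Sᶜ)).card : ℝ) ≤ ((n:ℝ) - S.card) * ((α + ε) * n) := by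
      have h2 : ∑ a ∈ Sᶜ, ((degL n G a : ℝ)) = ((G.filter (fun p => p.1 ∈ Sᶜ)).card : ℝ) := by
        rw [← sum_degL]; push_cast; rfl
      rw [← h2, ← hSc]
      calc ∑ a ∈ Sᶜ, ((degL n G a : ℝ)) ≤ ∑ _a ∈ Sᶜ, (α + ε) * n :=
            Finset.sum_le_sum (fun a _ => (hL a).2)
        _ = (Sᶜ.card : ℝ) * ((α + ε) * n) := by rw [Finset.sum_const, nsmul_eq_mul]
    -- the four counting bounds, in ℝ
    have A1 : (α - ε) * n * S.card ≤ (eST : ℝ) + S.card * ((n:ℝ) - T.card) := by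
      have h1 : (G.filter (fun p => p.1 ∈ S)).card ≤ eST + S.card * Tᶜ.card := by
        rw [heST, fact_split n G S T]
        exact Nat.add_le_add_left (fact_prod n G S T) _
      have h2 : ((G.filter (fun p => p.1 ∈ S)).card : ℝ)
          ≤ (eST : ℝ) + (S.card : ℝ) * (Tᶜ.card : ℝ) := by exact_mod_cast h1
      rw [hTc] at h2
      exact le_trans sumS_lb h2
    have A1' : (α - ε) * n * T.card ≤ (eST : ℝ) + T.card * ((n:ℝ) - S.card) := by
      have h1 : (G.filter (fun p => p.2 ∈ T)).card ≤ eST + Sᶜ.card * T.card := by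
        rw [heST, fact_split' n G S T]
        exact Nat.add_le_add_left (fact_prod' n G S T) _
      have h2 : ((G.filter (fun p => p.2 ∈ T)).card : ℝ)
          ≤ (eST : ℝ) + (Sᶜ.card : ℝ) * (T.card : ℝ) := by exact_mod_cast h1
      rw [hSc] at h2
      have h3 := le_trans sumT_lb h2
      linarith [h3]
    have A2 : (α - ε) * n * S.card ≤ (eST : ℝ) + ((n:ℝ) - T.card) * ((α + ε) * n) := by
      have h1 : (G.filter (fun p => p.1 ∈ S)).card
          ≤ eST + (G.filter (fun p => p.2 ∈ Tᶜ)).card := by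
        rw [heST, fact_split n G S T]
        exact Nat.add_le_add_left (fact_sub n G S T) _
      have h2 : ((G.filter (fun p => p.1 ∈ S)).card : ℝ)
          ≤ (eST : ℝ) + ((G.filter (fun p => p.2 ∈ Tᶜ)).card : ℝ) := by exact_mod_cast h1
      linarith [le_trans sumS_lb h2, sumTc_ub]
    have A2' : (α - ε) * n * T.card ≤ (eST : ℝ) + ((n:ℝ) - S.card) * ((α + ε) * n) := by
      have h1 : (G.filter (fun p => p.2 ∈ T)).card
          ≤ eST + (G.filter (fun p => p.1 ∈ Sᶜ)).card := by
        rw [heST, fact_split' n G S T]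
        exact Nat.add_le_add_left (fact_sub' n G S T) _
      have h2 : ((G.filter (fun p => p.2 ∈ T)).card : ℝ)
          ≤ (eST : ℝ) + ((G.filter (fun p => p.1 ∈ Sᶜ)).card : ℝ) := by exact_mod_cast h1
      linarith [le_trans sumT_lb h2, sumSc_ub]
    have key := real_key α ε n S.card T.card eST r hα hε hε1 hsq hn1
      (Nat.cast_nonneg _) hsn (Nat.cast_nonneg _) htn (Nat.cast_nonneg _)
      hr0 hr hrn A1 A1' A2 A2'
    exact_mod_cast key
  obtain ⟨F, hF⟩ := exists_factor_of_cc n r G hra hrb cc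
  exact ⟨F, hF⟩
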